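/- If B is a branching bisimulation up to ≈_b and (P1, P2) ∈ B, then P1 ≈_b P2; in particular, the composed relation ≈_b ∘ B ∘ ≈_b is a branching bisimulation. -/
import Mathlib


namespace SecurityNI

/-- Process terms: `0`, action prefix (`none` = τ, `some a` = observable action),
choice, CSP-style parallel composition with synchronization set, restriction,
hiding, and constants (whose defining equations are given by an environment). -/
inductive Proc (A : Type) (C : Type) : Type where
  | nil : Proc A C
  | pre : Option A → Proc A C → Proc A C
  | choice : Proc A C → Proc A C → Proc A C
  | par : Set A → Proc A C → Proc A C → Proc A C
  | restrict : Proc A C → Set A → Proc A C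
  | hide : Proc A C → Set A → Proc A C
  | const : C → Proc A C

variable {A C : Type}

/-- A process term is guarded when every constant occurrence is in the scope
of an action prefix operator. -/
def Guarded : Proc A C → Prop
  | .nil => True
  | .pre _ _ => True
  | .choice p q => Guarded p ∧ Guarded q
  | .par _ p q => Guarded p ∧ Guarded q
  | .restrict p _ => Guarded p
  | .hide p _ => Guarded p
  | .const _ => False

/-- Operational semantics, parameterized by the defining equations `env` of
the constants.  Labels are `Option A`, with `none` playing the role of τ. -/
inductive Trans (env : C → Proc A C) : Proc A C → Option A → Proc A C → Prop where
  | pre (a : Option A) (p : Proc A C) : Trans env (.pre a p) a p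
  | choiceL {p q a p'} (h : Trans env p a p') : Trans env (.choice p q) a p'
  | choiceR {p q a q'} (h : Trans env q a q') : Trans env (.choice p q) a q'
  | parL {L p q a p'} (h : Trans env p a p') (hn : ∀ x, a = some x → x ∉ L) :
      Trans env (.par L p q) a (.par L p' q)
  | parR {L p q a q'} (h : Trans env q a q') (hn : ∀ x, a = some x → x ∉ L) :
      Trans env (.par L p q) a (.par L p q')
  | sync {L p q x p' q'} (h1 : Trans env p (some x) p') (h2 : Trans env q (some x) q')
      (hx : x ∈ L) : Trans env (.par L p q) (some x) (.par L p' q')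
  | res {p a p' L} (h : Trans env p a p') (hn : ∀ x, a = some x → x ∉ L) :
      Trans env (.restrict p L) a (.restrict p' L)
  | hideIn {p x p' L} (h : Trans env p (some x) p') (hx : x ∈ L) :
      Trans env (.hide p L) none (.hide p' L)
  | hideOut {p a p' L} (h : Trans env p a p') (hn : ∀ x, a = some x → x ∉ L) :
      Trans env (.hide p L) a (.hide p' L)
  | const {c a p'} (h : Trans env (env c) a p') : Trans env (.const c) a p'

section LTS

variable {S : Type} (tr : S → Option A → S → Prop)

/-- Finitely many (possibly zero) τ-transitions. -/
def TauStar : S → S → Prop :=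
  Relation.ReflTransGen (fun s s' => tr s none s')

/-- `B` is a branching bisimulation. -/
def IsBranchingBisim (B : S → S → Prop) : Prop :=
  Symmetric B ∧
    ∀ s1 s2, B s1 s2 → ∀ a s1', tr s1 a s1' →
      (a = none ∧ B s1' s2) ∨
      (∃ s2b s2', TauStar tr s2 s2b ∧ tr s2b a s2' ∧ B s1 s2b ∧ B s1' s2')

/-- Branching bisimilarity `≈_b`. -/
def BrBisim (s1 s2 : S) : Prop :=
  ∃ B, IsBranchingBisim tr B ∧ B s1 s2

/-- `B` is a weak bisimulation. -/
def IsWeakBisim (B : S → S → Prop) : Prop :=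
  Symmetric B ∧
    ∀ s1 s2, B s1 s2 →
      (∀ s1', tr s1 none s1' → ∃ s2', TauStar tr s2 s2' ∧ B s1' s2') ∧
      (∀ x s1', tr s1 (some x) s1' →
        ∃ t t' s2', TauStar tr s2 t ∧ tr t (some x) t' ∧ TauStar tr t' s2' ∧ B s1' s2')

/-- Weak bisimilarity `≈`. -/
def WeakBisim (s1 s2 : S) : Prop :=
  ∃ B, IsWeakBisim tr B ∧ B s1 s2

/-- Reachability via finitely many transitions. -/
def Reach : S → S → Prop :=
  Relation.ReflTransGen (fun s s' => ∃ a, tr s a s')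

end LTS

section Security

variable (env : C → Proc A C) (AH : Set A)

/-- `P ∈ BrSNNI` iff `P∖A_H ≈_b P/A_H`. -/
def BrSNNI (p : Proc A C) : Prop :=
  BrBisim (Trans env) (.restrict p AH) (.hide p AH)

/-- All processes reachable from `q` perform only actions in `AH`. -/
def HighOnly (q : Proc A C) : Prop :=
  ∀ q', Reach (Trans env) q q' → ∀ a q'', Trans env q' a q'' → ∃ h ∈ AH, a = some h

/-- `P ∈ BrNDC` iff `P∖A_H ≈_b ((P ∥_L Q)/L)∖A_H` for every high-level `Q`
and every `L ⊆ A_H`. -/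
def BrNDC (p : Proc A C) : Prop :=
  ∀ q, HighOnly env AH q → ∀ L, L ⊆ AH →
    BrBisim (Trans env) (.restrict p AH) (.restrict (.hide (.par L p q) L) AH)

/-- `P ∈ SBrSNNI` iff every reachable process is BrSNNI. -/
def SBrSNNI (p : Proc A C) : Prop :=
  ∀ p', Reach (Trans env) p p' → BrSNNI env AH p'

/-- `P ∈ P_BrNDC` iff every reachable process is BrNDC. -/
def PBrNDC (p : Proc A C) : Prop :=
  ∀ p', Reach (Trans env) p p' → BrNDC env AH p'

/-- `P ∈ SBrNDC` iff for every reachable `P'` and every high transition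
`P' --h→ P''`, `P'∖A_H ≈_b P''∖A_H`. -/
def SBrNDC (p : Proc A C) : Prop :=
  ∀ p' p'', Reach (Trans env) p p' → ∀ h ∈ AH, Trans env p' (some h) p'' →
    BrBisim (Trans env) (.restrict p' AH) (.restrict p'' AH)

/-- `P ∈ BSNNI` iff `P∖A_H ≈ P/A_H`. -/
def BSNNI (p : Proc A C) : Prop :=
  WeakBisim (Trans env) (.restrict p AH) (.hide p AH)

/-- `P ∈ BNDC` iff `P∖A_H ≈ ((P ∥_L Q)/L)∖A_H` for every high-level `Q`
and every `L ⊆ A_H`. -/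
def BNDC (p : Proc A C) : Prop :=
  ∀ q, HighOnly env AH q → ∀ L, L ⊆ AH →
    WeakBisim (Trans env) (.restrict p AH) (.restrict (.hide (.par L p q) L) AH)

/-- `P ∈ SBSNNI` iff every reachable process is BSNNI. -/
def SBSNNI (p : Proc A C) : Prop :=
  ∀ p', Reach (Trans env) p p' → BSNNI env AH p'

/-- `P ∈ P_BNDC` iff every reachable process is BNDC. -/
def PBNDC (p : Proc A C) : Prop :=
  ∀ p', Reach (Trans env) p p' → BNDC env AH p'

/-- `P ∈ SBNDC` iff for every reachable `P'` and every high transition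
`P' --h→ P''`, `P'∖A_H ≈ P''∖A_H`. -/
def SBNDC (p : Proc A C) : Prop :=
  ∀ p' p'', Reach (Trans env) p p' → ∀ h ∈ AH, Trans env p' (some h) p'' →
    WeakBisim (Trans env) (.restrict p' AH) (.restrict p'' AH)

/-- No high-level actions occur in `p`: no process reachable from `p`
can perform a high-level action. -/
def NoHigh (p : Proc A C) : Prop :=
  ∀ p', Reach (Trans env) p p' → ∀ h ∈ AH, ∀ p'', ¬ Trans env p' (some h) p''

end Security

/-- The composition `≈_b ∘ B ∘ ≈_b`. -/
def UpToComp {S A : Type} (tr : S → Option A → S → Prop) (B : S → S → Prop)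
    (s t : S) : Prop :=
  ∃ u v, BrBisim tr s u ∧ B u v ∧ BrBisim tr v t

/-- `B` is a branching bisimulation up to `≈_b`. -/
def IsBranchingBisimUpTo {S A : Type} (tr : S → Option A → S → Prop)
    (B : S → S → Prop) : Prop :=
  Symmetric B ∧
    ∀ P1 P2, B P1 P2 →
      ∀ Pb1 a P1', TauStar tr P1 Pb1 → BrBisim tr P1 Pb1 → tr Pb1 a P1' →
        (a = none ∧ BrBisim tr Pb1 P1') ∨
        (∃ Pb2 P2', TauStar tr P2 Pb2 ∧ tr Pb2 a P2' ∧
          UpToComp tr B Pb1 Pb2 ∧ UpToComp tr B P1' P2')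

section UpToSoundAux

variable {S A : Type} (tr : S → Option A → S → Prop)

/-- Semi-branching bisimulation (Basten). -/
def IsSemiBB (B : S → S → Prop) : Prop :=
  Symmetric B ∧
    ∀ s1 s2, B s1 s2 → ∀ a s1', tr s1 a s1' →
      (a = none ∧ ∃ m, TauStar tr s2 m ∧ B s1 m ∧ B s1' m) ∨
      (∃ s2b s2', TauStar tr s2 s2b ∧ tr s2b a s2' ∧ B s1 s2b ∧ B s1' s2')

/-- Semi-branching bisimilarity. -/
def SemiBisim (s t : S) : Prop := ∃ B, IsSemiBB tr B ∧ B s t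

variable {tr}

lemma brBisim_refl (s : S) : BrBisim tr s s := by
  refine ⟨Eq, ⟨fun x y h => h.symm, ?_⟩, rfl⟩
  rintro s1 s2 rfl a s1' h
  exact Or.inr ⟨s1, s1', Relation.ReflTransGen.refl, h, rfl, rfl⟩

lemma brBisim_symm {s t : S} (h : BrBisim tr s t) : BrBisim tr t s :=
  let ⟨B, hB, hb⟩ := h; ⟨B, hB, hB.1 hb⟩

lemma isSemiBB_of_branching {B : S → S → Prop} (h : IsBranchingBisim tr B) :
    IsSemiBB tr B := by
  refine ⟨h.1, fun s1 s2 hb a s1' htr => ?_⟩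
  rcases h.2 s1 s2 hb a s1' htr with ⟨ha, hb'⟩ | hr
  · exact Or.inl ⟨ha, s2, Relation.ReflTransGen.refl, hb, hb'⟩
  · exact Or.inr hr

lemma semiBisim_symm {s t : S} (h : SemiBisim tr s t) : SemiBisim tr t s :=
  let ⟨B, hB, hb⟩ := h; ⟨B, hB, hB.1 hb⟩

lemma isSemiBB_semiBisim : IsSemiBB tr (SemiBisim tr) := by
  refine ⟨fun x y h => semiBisim_symm h, ?_⟩
  rintro s1 s2 ⟨B, hB, hb⟩ a s1' htr
  rcases hB.2 s1 s2 hb a s1' htr with ⟨ha, m, hm, p1, p2⟩ | ⟨sb, s', h1, h2, p1, p2⟩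
  · exact Or.inl ⟨ha, m, hm, ⟨B, hB, p1⟩, ⟨B, hB, p2⟩⟩
  · exact Or.inr ⟨sb, s', h1, h2, ⟨B, hB, p1⟩, ⟨B, hB, p2⟩⟩

/-- τ*-steps on the left can be matched by τ*-steps on the right. -/
lemma tauProp {B : S → S → Prop} (hB : IsSemiBB tr B) {u t ub : S}
    (h : B u t) (hs : TauStar tr u ub) : ∃ tb, TauStar tr t tb ∧ B ub tb := by
  have hs' : Relation.ReflTransGen (fun s s' => tr s none s') u ub := hs
  clear hs
  induction hs' with
  | refl => exact ⟨t, Relation.ReflTransGen.refl, h⟩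
  | tail _ hstep ih =>
    obtain ⟨tb, httb, hbtb⟩ := ih
    rcases hB.2 _ _ hbtb none _ hstep with ⟨_, m, hm, _, p2⟩ | ⟨m, m', h1, h2, _, p2⟩
    · exact ⟨m, Relation.ReflTransGen.trans httb hm, p2⟩
    · exact ⟨m', Relation.ReflTransGen.tail (Relation.ReflTransGen.trans httb h1) h2, p2⟩

lemma semiBisim_trans {x m y : S} (h1 : SemiBisim tr x m) (h2 : SemiBisim tr m y) :
    SemiBisim tr x y := by
  refine ⟨fun a b => ∃ c, SemiBisim tr a c ∧ SemiBisim tr c b, ⟨?_, ?_⟩, m, h1, h2⟩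
  · rintro a b ⟨c, p, q⟩; exact ⟨c, semiBisim_symm q, semiBisim_symm p⟩
  · rintro s1 s2 ⟨c, hxc, hcy⟩ a s1' htr
    rcases isSemiBB_semiBisim.2 _ _ hxc a s1' htr with
      ⟨ha, mb, hτ, p1, p2⟩ | ⟨mb, m', hτ, hstep, p1, p2⟩
    · obtain ⟨yb, hyτ, hq⟩ := tauProp isSemiBB_semiBisim hcy hτ
      exact Or.inl ⟨ha, yb, hyτ, ⟨mb, p1, hq⟩, ⟨mb, p2, hq⟩⟩
    · obtain ⟨yb, hyτ, hq⟩ := tauProp isSemiBB_semiBisim hcy hτ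
      rcases isSemiBB_semiBisim.2 _ _ hq a m' hstep with
        ⟨ha, k, hk, p3, p4⟩ | ⟨yb2, y', hτ2, hstep2, p3, p4⟩
      · exact Or.inl ⟨ha, k, Relation.ReflTransGen.trans hyτ hk, ⟨mb, p1, p3⟩, ⟨m', p2, p4⟩⟩
      · exact Or.inr ⟨yb2, y', Relation.ReflTransGen.trans hyτ hτ2, hstep2,
          ⟨mb, p1, p3⟩, ⟨m', p2, p4⟩⟩

/-- The stuttering lemma for semi-branching bisimilarity. -/
lemma semiBisim_stutter {s t0 c tn : S} (h1 : TauStar tr t0 c) (h2 : TauStar tr c tn)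
    (h3 : SemiBisim tr s t0) (h4 : SemiBisim tr s tn) : SemiBisim tr s c := by
  refine ⟨fun x y => SemiBisim tr x y ∨
      (∃ a b, TauStar tr a y ∧ TauStar tr y b ∧ SemiBisim tr x a ∧ SemiBisim tr x b) ∨
      (∃ a b, TauStar tr a x ∧ TauStar tr x b ∧ SemiBisim tr y a ∧ SemiBisim tr y b),
    ⟨?_, ?_⟩, Or.inr (Or.inl ⟨t0, tn, h1, h2, h3, h4⟩)⟩
  · rintro x y (h | h | h)
    · exact Or.inl (semiBisim_symm h)
    · exact Or.inr (Or.inr h)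
    · exact Or.inr (Or.inl h)
  · rintro x y (h | ⟨a0, b0, q1, q2, q3, q4⟩ | ⟨a0, b0, q1, q2, q3, q4⟩) a x' htr
    · rcases isSemiBB_semiBisim.2 _ _ h a x' htr with
        ⟨ha, m, hm, p1, p2⟩ | ⟨mb, m', hτ, hstep, p1, p2⟩
      · exact Or.inl ⟨ha, m, hm, Or.inl p1, Or.inl p2⟩
      · exact Or.inr ⟨mb, m', hτ, hstep, Or.inl p1, Or.inl p2⟩
    · rcases isSemiBB_semiBisim.2 _ _ q4 a x' htr with
        ⟨ha, m, hm, p1, p2⟩ | ⟨mb, m', hτ, hstep, p1, p2⟩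
      · exact Or.inl ⟨ha, m, Relation.ReflTransGen.trans q2 hm, Or.inl p1, Or.inl p2⟩
      · exact Or.inr ⟨mb, m', Relation.ReflTransGen.trans q2 hτ, hstep,
          Or.inl p1, Or.inl p2⟩
    · obtain ⟨yb, hyτ, hxyb⟩ := tauProp isSemiBB_semiBisim (semiBisim_symm q3) q1
      rcases isSemiBB_semiBisim.2 _ _ hxyb a x' htr with
        ⟨ha, m, hm, p1, p2⟩ | ⟨mb, m', hτ, hstep, p1, p2⟩
      · exact Or.inl ⟨ha, m, Relation.ReflTransGen.trans hyτ hm, Or.inl p1, Or.inl p2⟩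
      · exact Or.inr ⟨mb, m', Relation.ReflTransGen.trans hyτ hτ, hstep,
          Or.inl p1, Or.inl p2⟩

/-- Semi-branching bisimilarity is itself a branching bisimulation. -/
lemma isBranching_semiBisim : IsBranchingBisim tr (SemiBisim tr) := by
  refine ⟨fun x y h => semiBisim_symm h, fun s t h a s' htr => ?_⟩
  rcases isSemiBB_semiBisim.2 s t h a s' htr with ⟨ha, m, hm, p1, p2⟩ | hr
  · subst ha
    rcases Relation.ReflTransGen.cases_tail hm with heq | ⟨c, hc, hstep⟩
    · exact Or.inl ⟨rfl, heq ▸ p2⟩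
    · exact Or.inr ⟨c, m, hc, hstep,
        semiBisim_stutter hc (Relation.ReflTransGen.single hstep) h p1, p2⟩
  · exact Or.inr hr

lemma brBisim_iff_semi {s t : S} : BrBisim tr s t ↔ SemiBisim tr s t :=
  ⟨fun ⟨B, hB, hb⟩ => ⟨B, isSemiBB_of_branching hB, hb⟩,
   fun h => ⟨SemiBisim tr, isBranching_semiBisim, h⟩⟩

lemma brBisim_trans {x m y : S} (h1 : BrBisim tr x m) (h2 : BrBisim tr m y) :
    BrBisim tr x y :=
  brBisim_iff_semi.mpr (semiBisim_trans (brBisim_iff_semi.mp h1) (brBisim_iff_semi.mp h2))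

/-- Branching bisimilarity is itself a branching bisimulation. -/
lemma isBranching_brBisim : IsBranchingBisim tr (BrBisim tr) := by
  refine ⟨fun x y h => brBisim_symm h, fun s t h a s' htr => ?_⟩
  rcases isBranching_semiBisim.2 s t (brBisim_iff_semi.mp h) a s' htr with
    ⟨ha, p⟩ | ⟨tb, t', h1, h2, p1, p2⟩
  · exact Or.inl ⟨ha, brBisim_iff_semi.mpr p⟩
  · exact Or.inr ⟨tb, t', h1, h2, brBisim_iff_semi.mpr p1, brBisim_iff_semi.mpr p2⟩

lemma upToComp_ext {B : S → S → Prop} {a b c d : S} (h1 : BrBisim tr a b)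
    (h2 : UpToComp tr B b c) (h3 : BrBisim tr c d) : UpToComp tr B a d :=
  let ⟨u, v, q1, q2, q3⟩ := h2
  ⟨u, v, brBisim_trans h1 q1, q2, brBisim_trans q3 h3⟩

/-- The key transfer property: `≈_b ∘ B ∘ ≈_b` is a semi-branching bisimulation. -/
lemma isSemiBB_upToComp {B : S → S → Prop} (hB : IsBranchingBisimUpTo tr B) :
    IsSemiBB tr (UpToComp tr B) := by
  constructor
  · rintro x y ⟨u, v, h1, h2, h3⟩
    exact ⟨v, u, brBisim_symm h3, hB.1 h2, brBisim_symm h1⟩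
  rintro s t ⟨u, v, hsu, huv, hvt⟩ a s' htr
  rcases isBranching_brBisim.2 s u hsu a s' htr with
    ⟨ha, hs'u⟩ | ⟨ub, u', hτ, hstep, hsub, hs'u'⟩
  · exact Or.inl ⟨ha, t, Relation.ReflTransGen.refl,
      ⟨u, v, hsu, huv, hvt⟩, ⟨u, v, hs'u, huv, hvt⟩⟩
  have huub : BrBisim tr u ub := brBisim_trans (brBisim_symm hsu) hsub
  rcases hB.2 u v huv ub a u' hτ huub hstep with
    ⟨ha, hubu'⟩ | ⟨vb, v', hvτ, hstep2, hubvb, hu'v'⟩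
  · refine Or.inl ⟨ha, t, Relation.ReflTransGen.refl,
      ⟨u, v, hsu, huv, hvt⟩, ⟨u, v, ?_, huv, hvt⟩⟩
    exact brBisim_trans hs'u' (brBisim_trans (brBisim_symm hubu') (brBisim_symm huub))
  obtain ⟨tb0, hτt, hvbtb0⟩ := tauProp (isSemiBB_of_branching isBranching_brBisim) hvt hvτ
  rcases isBranching_brBisim.2 vb tb0 hvbtb0 a v' hstep2 with
    ⟨ha, hv'tb0⟩ | ⟨tb, t', hτ2, hstep3, hvbtb, hv't'⟩
  · exact Or.inl ⟨ha, tb0, hτt, upToComp_ext hsub hubvb hvbtb0,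
      upToComp_ext hs'u' hu'v' hv'tb0⟩
  · exact Or.inr ⟨tb, t', Relation.ReflTransGen.trans hτt hτ2, hstep3,
      upToComp_ext hsub hubvb hvbtb, upToComp_ext hs'u' hu'v' hv't'⟩

end UpToSoundAux

/-- soundness of the up-to technique: if `B` is a branching
bisimulation up to `≈_b` and `(P1,P2) ∈ B`, then `P1 ≈_b P2`; in particular
`≈_b ∘ B ∘ ≈_b` is a branching bisimulation. -/
theorem branching_bisim_up_to_sound {S A : Type} (tr : S → Option A → S → Prop)
    (B : S → S → Prop) (hB : IsBranchingBisimUpTo tr B)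
    (P1 P2 : S) (h : B P1 P2) :
    BrBisim tr P1 P2 ∧ IsBranchingBisim tr (UpToComp tr B) := by
  have hsemi := isSemiBB_upToComp hB
  have hsub : ∀ x y, UpToComp tr B x y → BrBisim tr x y := fun x y hxy =>
    brBisim_iff_semi.mpr ⟨UpToComp tr B, hsemi, hxy⟩
  refine ⟨hsub _ _ ⟨P1, P2, brBisim_refl P1, h, brBisim_refl P2⟩, hsemi.1, ?_⟩
  rintro s t hst a s' htr
  rcases hsemi.2 s t hst a s' htr with ⟨ha, m, hm, p1, p2⟩ | hr
  · subst ha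
    rcases Relation.ReflTransGen.cases_tail hm with heq | ⟨c, hc, hstep⟩
    · exact Or.inl ⟨rfl, heq ▸ p2⟩
    · have hsc : BrBisim tr s c := brBisim_iff_semi.mpr
        (semiBisim_stutter hc (Relation.ReflTransGen.single hstep)
          (brBisim_iff_semi.mp (hsub _ _ hst)) (brBisim_iff_semi.mp (hsub _ _ p1)))
      refine Or.inr ⟨c, m, hc, hstep, ?_, p2⟩
      obtain ⟨α, β, q1, q2, q3⟩ := hst
      exact ⟨α, β, q1, q2, brBisim_trans q3
        (brBisim_trans (brBisim_symm (hsub _ _ ⟨α, β, q1, q2, q3⟩)) hsc)⟩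
  · exact Or.inr hr

end SecurityNI
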